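/- For the figure-eight knot surgery manifold Y = S^3_{+3}(4_1) = M(-1; 1/3, 1/3, 1/4), with Ẑ_0 = q^{-1/48}(Ψ_{12,1}(q) - Ψ_{12,7}(q)) and Ẑ_1 = -q^{-1/48}Ψ_{12,9}(q), the combination with the p=3 Witt coefficients at q = e^{2πi/6} evaluates to τ_6[Y,0] = -i√3, where Ψ_{m,r}(e^{2πi/k}) = Σ_{n=1}^{2mk}(1/2 - n/(2mk))ψ^{(r)}_{2m}(n)e^{iπn²/(2mk)} with ψ^{(r)}_{2m}(n) = ±1 for n ≡ ±r mod 2m and 0 otherwise. -/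

import Mathlib

open Complex Finset

/-- The Eichler integral of the weight 3/2 false theta function at the k-th root of
unity: `Ψ_{m,r}(e^{2πi/k}) = ∑_{n=1}^{2mk} (1/2 - n/(2mk)) ψ^{(r)}_{2m}(n) e^{iπn²/(2mk)}`,
where `ψ^{(r)}_{2m}(n) = ±1` for `n ≡ ±r (mod 2m)` and `0` otherwise. -/
noncomputable def PsiFT (m r k : ℕ) : ℂ :=
  ∑ n ∈ Finset.Icc 1 (2 * m * k),
    ((1 : ℂ) / 2 - (n : ℂ) / (2 * m * k)) *
      (if n % (2 * m) = r % (2 * m) then 1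
        else if (n + r) % (2 * m) = 0 then -1 else 0) *
      Complex.exp (Real.pi * I * (n : ℂ) ^ 2 / (2 * m * k))

/-- The odd Witt coefficients for `p = 3`:
`c^{Witt}_t = (e^{-iπ/4}/(4√3)) ∑_{r=0}^{5} e^{-(iπ/36)(6r-2t+3)²}`. -/
noncomputable def cWittP3 (t : ℕ) : ℂ :=
  (Complex.exp (-(Real.pi * I) / 4) / (4 * Real.sqrt 3)) *
    ∑ r ∈ range 6,
      Complex.exp (-(Real.pi * I / 36) * (6 * (r : ℂ) - 2 * (t : ℂ) + 3) ^ 2)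

-- reduction for Psi terms: M = 1 + 48 j + 288 k
lemma ered (M : ℂ) (j k : ℕ) (h : M = 1 + 48 * (j : ℂ) + 288 * (k : ℂ)) :
    Complex.exp (Real.pi * I * M / 144) =
      Complex.exp (Real.pi * I / 144) * Complex.exp (Real.pi * I / 3) ^ j := by
  have h2 : Real.pi * I * M / 144 =
      Real.pi * I / 144 + (j : ℂ) * (Real.pi * I / 3) + (k : ℤ) * (2 * Real.pi * I) := by
    rw [h]; push_cast; ring
  rw [h2, Complex.exp_add, Complex.exp_add, Complex.exp_nat_mul,
    Complex.exp_int_mul_two_pi_mul_I, mul_one]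

-- reduction for cWitt t=1 terms: M = 1 + 24 j + 72 k
lemma eredW (M : ℂ) (j k : ℕ) (h : M = 1 + 24 * (j : ℂ) + 72 * (k : ℂ)) :
    Complex.exp (-(Real.pi * I / 36 * M)) =
      Complex.exp (-(Real.pi * I / 36)) * Complex.exp (-(2 * Real.pi * I / 3)) ^ j := by
  have h2 : -(Real.pi * I / 36 * M) =
      -(Real.pi * I / 36) + (j : ℂ) * (-(2 * Real.pi * I / 3)) + (-(k : ℤ) : ℤ) * (2 * Real.pi * I) := by
    rw [h]; push_cast; ring
  rw [h2, Complex.exp_add, Complex.exp_add, Complex.exp_nat_mul,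
    Complex.exp_int_mul_two_pi_mul_I, mul_one]

-- reduction for cWitt t=0 terms: M = 9 + 72 k
lemma eredW0 (M : ℂ) (k : ℕ) (h : M = 9 + 72 * (k : ℂ)) :
    Complex.exp (-(Real.pi * I / 36 * M)) = Complex.exp (-(Real.pi * I) / 4) := by
  have h2 : -(Real.pi * I / 36 * M) =
      -(Real.pi * I) / 4 + (-(k : ℤ) : ℤ) * (2 * Real.pi * I) := by
    rw [h]; push_cast; ring
  rw [h2, Complex.exp_add, Complex.exp_int_mul_two_pi_mul_I, mul_one]

lemma exp_ne_one_of_frac (a b : ℤ) (hb : (b : ℂ) ≠ 0) (hnd : ∀ n : ℤ, a ≠ 2 * b * n) :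
    Complex.exp ((a : ℂ) * Real.pi * I / b) ≠ 1 := by
  rw [Ne, Complex.exp_eq_one_iff]
  rintro ⟨n, hn⟩
  have hπ : (Real.pi : ℂ) ≠ 0 := Complex.ofReal_ne_zero.mpr Real.pi_ne_zero
  have h2 : ((a : ℂ) - 2 * b * n) * (Real.pi * I) = 0 := by
    field_simp at hn
    linear_combination (Real.pi * I) * hn
  have h3 : ((a - 2 * b * n : ℤ) : ℂ) = 0 := by
    rcases mul_eq_zero.mp h2 with h | h
    · push_cast; linear_combination h
    · exact absurd h (mul_ne_zero hπ Complex.I_ne_zero)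
  have h4 : a - 2 * b * n = 0 := by exact_mod_cast h3
  exact hnd n (by linarith)

lemma uu_sum : 1 + Complex.exp (-(2 * Real.pi * I / 3)) + Complex.exp (-(2 * Real.pi * I / 3)) ^ 2 = 0 := by
  set u := Complex.exp (-(2 * Real.pi * I / 3)) with hu
  have h3 : u ^ 3 = 1 := by
    rw [hu, ← Complex.exp_nat_mul,
      show (3 : ℕ) * -(2 * Real.pi * I / 3) = (-1 : ℤ) * (2 * Real.pi * I) by push_cast; ring,
      Complex.exp_int_mul_two_pi_mul_I]
  have hne : u ≠ 1 := by
    rw [hu, show -(2 * Real.pi * I / 3) = ((-2 : ℤ) : ℂ) * Real.pi * I / (3 : ℤ) by push_cast; ring]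
    exact exp_ne_one_of_frac (-2) 3 (by norm_num) (by intro n; omega)
  have hfac : (u - 1) * (1 + u + u ^ 2) = 0 := by linear_combination h3
  rcases mul_eq_zero.mp hfac with h | h
  · exact absurd (sub_eq_zero.mp h) hne
  · exact h

lemma ww_sum : 1 + Complex.exp (Real.pi * I / 3) + Complex.exp (Real.pi * I / 3) ^ 2 +
    Complex.exp (Real.pi * I / 3) ^ 3 + Complex.exp (Real.pi * I / 3) ^ 4 +
    Complex.exp (Real.pi * I / 3) ^ 5 = 0 := by
  set w := Complex.exp (Real.pi * I / 3) with hw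
  have h6 : w ^ 6 = 1 := by
    rw [hw, ← Complex.exp_nat_mul,
      show (6 : ℕ) * (Real.pi * I / 3) = (1 : ℤ) * (2 * Real.pi * I) by push_cast; ring,
      Complex.exp_int_mul_two_pi_mul_I]
  have hne : w ≠ 1 := by
    rw [hw, show Real.pi * I / 3 = ((1 : ℤ) : ℂ) * Real.pi * I / (3 : ℤ) by push_cast; ring]
    exact exp_ne_one_of_frac 1 3 (by norm_num) (by intro n; omega)
  have hfac : (w - 1) * (1 + w + w ^ 2 + w ^ 3 + w ^ 4 + w ^ 5) = 0 := by linear_combination h6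
  rcases mul_eq_zero.mp hfac with h | h
  · exact absurd (sub_eq_zero.mp h) hne
  · exact h

lemma cWitt1_eq : cWittP3 1 = 0 := by
  rw [cWittP3]
  norm_num [Finset.sum_range_succ]
  rw [eredW 49 2 0 (by norm_num), eredW 169 1 2 (by norm_num), eredW 361 0 5 (by norm_num),
    eredW 625 2 8 (by norm_num), eredW 961 1 13 (by norm_num)]
  linear_combination (2 * Complex.exp (-(Real.pi * I / 36))) * uu_sum

lemma exp_neg_pi_half : Complex.exp (-(Real.pi * I) / 2) = -I := by
  rw [show -(Real.pi * I) / 2 = (((-(Real.pi / 2) : ℝ)) : ℂ) * I by push_cast; ring,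
    Complex.exp_mul_I, ← Complex.ofReal_cos, ← Complex.ofReal_sin]
  rw [show Real.cos (-(Real.pi / 2)) = 0 by rw [Real.cos_neg, Real.cos_pi_div_two],
    show Real.sin (-(Real.pi / 2)) = -1 by rw [Real.sin_neg, Real.sin_pi_div_two]]
  push_cast
  ring

lemma cWitt0_eq : cWittP3 0 = -(I * (Real.sqrt 3 : ℝ)) / 2 := by
  rw [cWittP3]
  norm_num [Finset.sum_range_succ]
  rw [eredW0 9 0 (by norm_num), eredW0 81 1 (by norm_num), eredW0 225 3 (by norm_num),
    eredW0 441 6 (by norm_num), eredW0 729 10 (by norm_num), eredW0 1089 15 (by norm_num)]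
  have h2 : Complex.exp (-(Real.pi * I) / 4) * Complex.exp (-(Real.pi * I) / 4) = -I := by
    rw [← Complex.exp_add, show -(Real.pi * I) / 4 + -(Real.pi * I) / 4 = -(Real.pi * I) / 2 by ring]
    exact exp_neg_pi_half
  have hs : ((Real.sqrt 3 : ℝ) : ℂ) ^ 2 = 3 := by
    rw [← Complex.ofReal_pow]
    norm_num [Real.sq_sqrt]
  have hsne : ((Real.sqrt 3 : ℝ) : ℂ) ≠ 0 := by
    simp [Real.sqrt_eq_zero']
  field_simp
  rw [neg_div] at h2
  linear_combination (12 : ℂ) * h2 + (4 * I) * hs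

set_option maxHeartbeats 4000000 in
lemma psi_comb :
    Complex.exp (-(Real.pi * I) / 144) * (PsiFT 12 1 6 - PsiFT 12 7 6) = 2 := by
  simp only [PsiFT]
  norm_num
  rw [show Finset.Icc 1 144 = Finset.Ico 1 145 by rfl]
  simp only [Finset.sum_Ico_eq_sum_range]
  norm_num [Finset.sum_range_succ]
  rw [ered 529 5 1 (by norm_num),
    ered 625 1 2 (by norm_num),
    ered 2209 4 7 (by norm_num),
    ered 2401 2 8 (by norm_num),
    ered 5041 3 17 (by norm_num),
    ered 5329 3 18 (by norm_num),
    ered 9025 2 31 (by norm_num),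
    ered 9409 4 32 (by norm_num),
    ered 14161 1 49 (by norm_num),
    ered 14641 5 50 (by norm_num),
    ered 20449 0 71 (by norm_num),
    ered 49 1 0 (by norm_num),
    ered 289 0 1 (by norm_num),
    ered 961 2 3 (by norm_num),
    ered 1681 5 5 (by norm_num),
    ered 3025 3 10 (by norm_num),
    ered 4225 4 14 (by norm_num),
    ered 6241 4 21 (by norm_num),
    ered 7921 3 27 (by norm_num),
    ered 10609 5 36 (by norm_num),
    ered 12769 2 44 (by norm_num),
    ered 16129 0 56 (by norm_num),
    ered 18769 1 65 (by norm_num)]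
  have key : Complex.exp (-(Real.pi * I) / 144) * Complex.exp (Real.pi * I / 144) = 1 := by
    rw [← Complex.exp_add, show -(Real.pi * I) / 144 + Real.pi * I / 144 = 0 by ring,
      Complex.exp_zero]
  set w := Complex.exp (Real.pi * I / 3) with hw
  linear_combination (7 / 4 - (w + w ^ 2 + w ^ 3 + w ^ 4 + w ^ 5) / 4) * key - (1 / 4) * ww_sum

/-- For `Y = S³₊₃(4₁) = M(-1; 1/3, 1/3, 1/4)`, with `Ẑ₀ = q^{-1/48}(Ψ_{12,1} - Ψ_{12,7})`
and `Ẑ₁ = -q^{-1/48} Ψ_{12,9}` evaluated at `q = e^{2πi/6}` (so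
`q^{-1/48} = e^{-πi/144}`), the combination with the `p = 3` Witt coefficients gives
`τ₆[Y, 0] = -i√3`. -/
theorem tau6_S3_plus3_fig8 :
    cWittP3 0 * (Complex.exp (-(Real.pi * I) / 144) * (PsiFT 12 1 6 - PsiFT 12 7 6)) +
      cWittP3 1 * (-(Complex.exp (-(Real.pi * I) / 144)) * PsiFT 12 9 6)
    = -(I * Real.sqrt 3) := by
  rw [cWitt0_eq, cWitt1_eq, psi_comb]
  ring
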